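/- Let G be a 2-connected graph with colouring f : V(G) → {1, 0, 0̂}, and let G′ = (G − f⁻¹(1)) − E(G[f⁻¹(0)]) be obtained by deleting all vertices of colour 1 and all edges between vertices of colour 0. Then for any f-respecting simultaneous dominating set S of G, the set S \ f⁻¹(1) is a vertex cover of G′. Conversely, for any vertex cover C of G′, the set C ∪ f⁻¹(1) is an f-respecting simultaneous dominating set of G. -/

import Mathlib

open SimpleGraph

variable {V : Type*}

/-- Number of connected components of a graph. -/
noncomputable def numComponents (G : SimpleGraph V) : ℕ := Nat.card G.ConnectedComponent

/-- A vertex is a cut vertex if its removal increases the number of connected components. -/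
def IsCutVertex (G : SimpleGraph V) (v : V) : Prop :=
  numComponents G < numComponents (G.induce {u | u ≠ v})

/-- `T` is a spanning tree of `G`: a subgraph on all vertices of `G` that is a tree. -/
def IsSpanningTree (G T : SimpleGraph V) : Prop := T ≤ G ∧ T.IsTree

/-- `v` is dominated by `S` in the graph `T`. -/
def DominatedIn (T : SimpleGraph V) (S : Set V) (v : V) : Prop :=
  v ∈ S ∨ ∃ u ∈ S, T.Adj v u

/-- `v` is simultaneously dominated by `S`: dominated in every spanning tree of `G`. -/
def SimDominated (G : SimpleGraph V) (S : Set V) (v : V) : Prop :=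
  ∀ T : SimpleGraph V, IsSpanningTree G T → DominatedIn T S v

/-- `S` is a simultaneous dominating set of `G`. -/
def IsSDSet (G : SimpleGraph V) (S : Set V) : Prop := ∀ v, SimDominated G S v

/-- `C` is a vertex cover of `G`. -/
def IsVertexCover (G : SimpleGraph V) (C : Set V) : Prop :=
  ∀ ⦃u v : V⦄, G.Adj u v → u ∈ C ∨ v ∈ C

/-- A block of `G`: a maximal vertex set inducing a connected subgraph without cut vertices. -/
def IsBlock (G : SimpleGraph V) (B : Set V) : Prop :=
  B.Nonempty ∧ (G.induce B).Connected ∧ (∀ x, ¬ IsCutVertex (G.induce B) x) ∧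
    ∀ B' : Set V, B ⊆ B' → (G.induce B').Connected →
      (∀ x, ¬ IsCutVertex (G.induce B') x) → B' = B

/-- 2-connected: connected, at least 3 vertices, no cut vertex. -/
def TwoConnected (G : SimpleGraph V) [Fintype V] : Prop :=
  G.Connected ∧ 3 ≤ Fintype.card V ∧ ∀ v, ¬ IsCutVertex G v

/-- Colours 1, 0, 0̂. -/
inductive Col : Type
  | one | zero | zhat
deriving DecidableEq

/-- `S` is an `f`-respecting simultaneous dominating set of `G`. -/
def RespSDS (G : SimpleGraph V) (f : V → Col) (S : Set V) : Prop :=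
  (∀ v, f v = Col.one → v ∈ S) ∧ ∀ v, f v = Col.zhat → SimDominated G S v

/-- A minimum `f`-respecting simultaneous dominating set. -/
def MinRespSDS (G : SimpleGraph V) (f : V → Col) (S : Set V) : Prop :=
  RespSDS G f S ∧ ∀ S' : Set V, RespSDS G f S' → S.ncard ≤ S'.ncard

/-- The graph `(G − f⁻¹(1)) − E(G[f⁻¹(0)])`: delete all vertices of colour 1 (keeping them as
isolated vertices) and all edges between two vertices of colour 0. -/
def Gminus (G : SimpleGraph V) (f : V → Col) : SimpleGraph V where
  Adj u w := G.Adj u w ∧ f u ≠ Col.one ∧ f w ≠ Col.one ∧ ¬(f u = Col.zero ∧ f w = Col.zero)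
  symm := ⟨fun u w ⟨h, h1, h2, h3⟩ => ⟨h.symm, h2, h1, fun ⟨a, b⟩ => h3 ⟨b, a⟩⟩⟩
  loopless := ⟨fun u h => G.loopless.irrefl u h.1⟩

section Aux

/-- Transfer reachability along a walk after deleting a non-bridge edge. -/
lemma aux_reach_del {G : SimpleGraph V} {v w : V}
    (hr : (G \ fromEdgeSet {s(v, w)}).Reachable v w) {a b : V} (p : G.Walk a b) :
    (G \ fromEdgeSet {s(v, w)}).Reachable a b := by
  induction p with
  | nil => exact Reachable.refl _
  | @cons x y z h p ih =>
    refine Reachable.trans ?_ ih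
    by_cases he : s(x, y) = s(v, w)
    · rw [Sym2.eq_iff] at he
      rcases he with ⟨rfl, rfl⟩ | ⟨rfl, rfl⟩
      · exact hr
      · exact hr.symm
    · exact Adj.reachable (by rw [sdiff_adj, fromEdgeSet_adj]; exact ⟨h, fun hh => he hh.1⟩)

/-- Every finite connected graph has a spanning tree. -/
lemma aux_exists_spanning_tree [Fintype V] :
    ∀ (n : ℕ) (G : SimpleGraph V), G.edgeSet.ncard ≤ n → G.Connected →
      ∃ T, T ≤ G ∧ T.IsTree := by
  intro n
  induction n with
  | zero =>
    intro G hn hc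
    refine ⟨G, le_refl _, hc, ?_⟩
    have h0 : G.edgeSet = ∅ := by
      have := G.edgeSet.toFinite
      rw [← Set.ncard_eq_zero this]
      omega
    rw [edgeSet_eq_empty] at h0
    rw [h0]
    exact isAcyclic_bot
  | succ n ih =>
    intro G hn hc
    by_cases ha : G.IsAcyclic
    · exact ⟨G, le_refl _, hc, ha⟩
    · rw [isAcyclic_iff_forall_adj_isBridge] at ha
      push_neg at ha
      obtain ⟨v, w, hadj, hb⟩ := ha
      rw [isBridge_iff] at hb
      push_neg at hb
      have hr : (G \ fromEdgeSet {s(v, w)}).Reachable v w := hb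
      set G2 := G \ fromEdgeSet {s(v, w)} with hG2
      have hc2 : G2.Connected := by
        haveI := hc.nonempty
        exact Connected.mk fun a b =>
          (hc.preconnected a b).elim (fun p => aux_reach_del hr p)
      have hsub : G2.edgeSet ⊂ G.edgeSet := by
        constructor
        · exact edgeSet_mono sdiff_le
        · intro hle
          have h1 : s(v, w) ∈ G2.edgeSet := hle hadj
          rw [mem_edgeSet, hG2, sdiff_adj, fromEdgeSet_adj] at h1
          exact h1.2 ⟨rfl, hadj.ne⟩
      have hlt : G2.edgeSet.ncard < G.edgeSet.ncard :=
        Set.ncard_lt_ncard hsub G.edgeSet.toFinite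
      obtain ⟨T, hT, hTt⟩ := ih G2 (by omega) hc2
      exact ⟨T, le_trans hT sdiff_le, hTt⟩

/-- In a 2-connected graph, removing a vertex keeps the graph connected. -/
lemma aux_del_connected [Fintype V] {G : SimpleGraph V} (hG : TwoConnected G) (u : V) :
    (G.induce {x | x ≠ u}).Connected := by
  obtain ⟨hc, h3, hcut⟩ := hG
  have h1 : numComponents G = 1 := by
    rw [numComponents, Nat.card_eq_one_iff_unique]
    constructor
    · constructor
      intro a b
      refine ConnectedComponent.ind₂ (fun x y => ?_) a b
      exact ConnectedComponent.eq.mpr (hc.preconnected x y)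
    · obtain ⟨x⟩ := hc.nonempty
      exact ⟨G.connectedComponentMk x⟩
  have h2 := hcut u
  rw [IsCutVertex, h1, not_lt] at h2
  have hne : Nonempty ({x | x ≠ u} : Set V) := by
    obtain ⟨b, hb⟩ := Fintype.exists_ne_of_one_lt_card (by omega) u
    exact ⟨⟨b, hb⟩⟩
  haveI := hne
  refine Connected.mk fun a b => ?_
  by_contra hnr
  haveI : Nontrivial (SimpleGraph.ConnectedComponent (G.induce {x | x ≠ u})) :=
    ⟨SimpleGraph.connectedComponentMk (G.induce {x | x ≠ u}) a,
      SimpleGraph.connectedComponentMk (G.induce {x | x ≠ u}) b,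
      fun h => hnr (ConnectedComponent.eq.mp h)⟩
  have hnt : 1 < Nat.card (SimpleGraph.ConnectedComponent (G.induce {x | x ≠ u})) := Finite.one_lt_card
  rw [numComponents] at h2
  omega

/-- For every edge `uv` of a 2-connected graph there is a spanning tree in which `v` is
the unique neighbour of `u`. -/
lemma aux_leaf_tree [Fintype V] {G : SimpleGraph V} (hG : TwoConnected G) {u v : V}
    (huv : G.Adj u v) : ∃ T, IsSpanningTree G T ∧ ∀ w, T.Adj u w → w = v := by
  classical
  have hvu : v ≠ u := huv.ne'
  set G1 : SimpleGraph V :=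
    { Adj := fun a b => (G.Adj a b ∧ a ≠ u ∧ b ≠ u) ∨ (a = u ∧ b = v) ∨ (a = v ∧ b = u)
      symm := ⟨by
        rintro a b (⟨h, h1, h2⟩ | ⟨rfl, rfl⟩ | ⟨rfl, rfl⟩)
        · exact Or.inl ⟨h.symm, h2, h1⟩
        · exact Or.inr (Or.inr ⟨rfl, rfl⟩)
        · exact Or.inr (Or.inl ⟨rfl, rfl⟩)⟩
      loopless := ⟨by
        rintro a (⟨h, _, _⟩ | ⟨rfl, h⟩ | ⟨rfl, h⟩)
        · exact G.loopless.irrefl a h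
        · exact hvu h.symm
        · exact hvu h⟩ } with hG1def
  have hle : G1 ≤ G := by
    rintro a b (⟨h, _, _⟩ | ⟨rfl, rfl⟩ | ⟨rfl, rfl⟩)
    · exact h
    · exact huv
    · exact huv.symm
  have hhom : ∀ x : V, x ≠ u → (G1.Reachable x v) := by
    have hcon := aux_del_connected hG u
    have hwalk : ∀ {a b : ({x | x ≠ u} : Set V)}, (G.induce {x | x ≠ u}).Walk a b →
        G1.Reachable a.val b.val := by
      intro a b p
      induction p with
      | nil => exact Reachable.refl _
      | @cons x y z h p ih => exact (Adj.reachable (Or.inl ⟨h, x.2, y.2⟩)).trans ih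
    intro x hx
    exact (hcon.preconnected ⟨x, hx⟩ ⟨v, hvu⟩).elim fun p => hwalk p
  have hc1 : G1.Connected := by
    haveI : Nonempty V := ⟨u⟩
    refine Connected.mk fun a b => ?_
    have key : ∀ x : V, G1.Reachable x v := by
      intro x
      by_cases hx : x = u
      · subst hx
        exact Adj.reachable (Or.inr (Or.inl ⟨rfl, rfl⟩))
      · exact hhom x hx
    exact (key a).trans (key b).symm
  obtain ⟨T, hT, hTt⟩ := aux_exists_spanning_tree (G1.edgeSet.ncard) G1 le_rfl hc1
  refine ⟨T, ⟨le_trans hT hle, hTt⟩, ?_⟩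
  intro w hw
  rcases hT hw with (⟨_, h1, _⟩ | ⟨_, rfl⟩ | ⟨h1, _⟩)
  · exact absurd rfl h1
  · rfl
  · exact absurd h1.symm hvu

/-- Key: a simultaneously dominated vertex not in `S` has all its neighbours in `S`. -/
lemma aux_simdom_forward [Fintype V] {G : SimpleGraph V} {S : Set V} {u : V}
    (hG : TwoConnected G) (hd : SimDominated G S u) (hu : u ∉ S) {v : V}
    (huv : G.Adj u v) : v ∈ S := by
  obtain ⟨T, hT, hleaf⟩ := aux_leaf_tree hG huv
  rcases hd T hT with h | ⟨w, hw, hadj⟩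
  · exact absurd h hu
  · rw [hleaf w hadj] at hw
    exact hw

/-- In a connected graph on ≥ 2 vertices every vertex has a neighbour. -/
lemma aux_exists_adj [Fintype V] (h3 : 3 ≤ Fintype.card V) {T : SimpleGraph V}
    (hT : T.Connected) (v : V) : ∃ u, T.Adj v u := by
  obtain ⟨w, hw⟩ := Fintype.exists_ne_of_one_lt_card (by omega) v
  obtain ⟨p⟩ := hT.preconnected v w
  cases p with
  | nil => exact absurd rfl hw
  | cons h _ => exact ⟨_, h⟩

end Aux

/-- In a 2-connected graph, for any `f`-respecting SD-set `S`, the set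
`S \ f⁻¹(1)` is a vertex cover of `G′ = (G − f⁻¹(1)) − E(G[f⁻¹(0)])`; conversely, for any
vertex cover `C` of `G′`, the set `C ∪ f⁻¹(1)` is an `f`-respecting SD-set of `G`. -/
theorem stmt11 [Fintype V] (G : SimpleGraph V) (hG : TwoConnected G) (f : V → Col) :
    (∀ S : Set V, RespSDS G f S → _root_.IsVertexCover (Gminus G f) (S \ f ⁻¹' {Col.one})) ∧
    (∀ C : Set V, _root_.IsVertexCover (Gminus G f) C → RespSDS G f (C ∪ f ⁻¹' {Col.one})) := by
  constructor
  · rintro S ⟨hS1, hS2⟩ a b hab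
    obtain ⟨hGab, ha1, hb1, h00⟩ := hab
    by_cases hfa : f a = Col.zhat
    · have hd := hS2 a hfa
      by_cases haS : a ∈ S
      · exact Or.inl ⟨haS, ha1⟩
      · exact Or.inr ⟨aux_simdom_forward hG hd haS hGab, hb1⟩
    · have hfb : f b = Col.zhat := by
        cases h : f a <;> cases h' : f b <;> simp_all
      have hd := hS2 b hfb
      by_cases hbS : b ∈ S
      · exact Or.inr ⟨hbS, hb1⟩
      · exact Or.inl ⟨aux_simdom_forward hG hd hbS hGab.symm, ha1⟩
  · rintro C hC
    refine ⟨fun v hv => Or.inr hv, fun v hv T hT => ?_⟩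
    by_cases hvC : v ∈ C
    · exact Or.inl (Or.inl hvC)
    obtain ⟨u, hu⟩ := aux_exists_adj hG.2.1 hT.2.1 v
    refine Or.inr ⟨u, ?_, hu⟩
    have hGvu : G.Adj v u := hT.1 hu
    by_cases hfu : f u = Col.one
    · exact Or.inr hfu
    · have hadj : (Gminus G f).Adj v u :=
        ⟨hGvu, by simp [hv], hfu, fun h => by simp [hv] at h⟩
      rcases hC hadj with h | h
      · exact absurd h hvC
      · exact Or.inl h
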